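/- Let (Ω, ℱ, ℙ) be a probability space, let n ≥ 2 be an integer, and let A be a real number with 0 < A ≤ n². Let ε and c be real numbers with 0 < ε < c, and let k be a natural number with (k : ℝ) = ε·(n²/A)^{2/3}. Let X_1, …, X_k be real-valued square-integrable random variables on Ω, each with mean E[X_i] = A/n and variance Var[X_i] = (n−1)A²/(n²(n+1)). Then ℙ[ Σ_{i=1}^k X_i ≥ c·n ] ≤ ε³/(c − ε)². -/

import Mathlib

open MeasureTheory ProbabilityTheory

lemma sq_eLpNorm_two {Ω : Type*} [MeasureSpace Ω] (Z : Ω → ℝ) :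
    eLpNorm Z 2 ℙ ^ 2 = ∫⁻ ω, ‖Z ω‖ₑ ^ 2 ∂ℙ := by
  rw [eLpNorm_eq_lintegral_rpow_enorm_toReal two_ne_zero ENNReal.ofNat_ne_top]
  simp only [ENNReal.toReal_ofNat, one_div]
  rw [← ENNReal.rpow_natCast _ 2, ← ENNReal.rpow_mul]
  norm_num

lemma key_arith {A B ε n σ2 : ℝ} (hA0 : 0 < A) (hε : 0 < ε) (hn : 0 < n)
    (hB1 : (1:ℝ) ≤ B) (hB3 : B ^ 3 * A ^ 2 = n ^ 4) (hεB : (1:ℝ) ≤ ε * B)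
    (hσ2le : σ2 ≤ A ^ 2 / n ^ 2) :
    (ε * B) ^ 2 * σ2 ≤ ε ^ 3 * n ^ 2 := by
  have e1 : ε ^ 3 * n ^ 4 = ε ^ 3 * (B ^ 3 * A ^ 2) := by rw [hB3]
  have key : ε ^ 2 * B ^ 2 * A ^ 2 ≤ ε ^ 3 * n ^ 4 := by
    nlinarith [e1, mul_nonneg (by linarith : (0:ℝ) ≤ ε * B - 1)
      (by positivity : (0:ℝ) ≤ ε ^ 2 * B ^ 2 * A ^ 2)]
  calc (ε * B) ^ 2 * σ2 ≤ (ε * B) ^ 2 * (A ^ 2 / n ^ 2) :=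
        mul_le_mul_of_nonneg_left hσ2le (by positivity)
    _ = ε ^ 2 * B ^ 2 * A ^ 2 / n ^ 2 := by ring
    _ ≤ ε ^ 3 * n ^ 4 / n ^ 2 := by gcongr
    _ = ε ^ 3 * n ^ 2 := by field_simp

set_option maxHeartbeats 1000000 in
theorem early_termination_probability
    {Ω : Type*} [MeasureSpace Ω] [IsProbabilityMeasure (ℙ : Measure Ω)]
    (n : ℕ) (hn : 2 ≤ n) (A : ℝ) (hA0 : 0 < A) (hA : A ≤ (n : ℝ) ^ 2)
    (ε c : ℝ) (hε : 0 < ε) (hεc : ε < c)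
    (k : ℕ) (hk : (k : ℝ) = ε * ((n : ℝ) ^ 2 / A) ^ ((2 : ℝ) / 3))
    (X : Fin k → Ω → ℝ)
    (hmeas : ∀ i, Measurable (X i))
    (hL2 : ∀ i, MemLp (X i) 2 ℙ)
    (hmean : ∀ i, (∫ ω, X i ω ∂ℙ) = A / n)
    (hvar : ∀ i, variance (X i) ℙ =
      ((n : ℝ) - 1) * A ^ 2 / ((n : ℝ) ^ 2 * ((n : ℝ) + 1))) :
    ℙ {ω | c * n ≤ ∑ i, X i ω} ≤ ENNReal.ofReal (ε ^ 3 / (c - ε) ^ 2) := by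
  have hn2 : (2 : ℝ) ≤ (n : ℝ) := by exact_mod_cast hn
  have hnpos : (0 : ℝ) < n := by linarith
  set B : ℝ := ((n : ℝ) ^ 2 / A) ^ ((2 : ℝ) / 3) with hBdef
  have hx1 : (1 : ℝ) ≤ (n : ℝ) ^ 2 / A := (one_le_div hA0).mpr hA
  have hB1 : (1 : ℝ) ≤ B := Real.one_le_rpow hx1 (by norm_num)
  have hB0 : (0 : ℝ) < B := by linarith
  have hBx : B ≤ (n : ℝ) ^ 2 / A := by
    calc B ≤ ((n : ℝ) ^ 2 / A) ^ (1 : ℝ) :=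
          Real.rpow_le_rpow_of_exponent_le hx1 (by norm_num)
      _ = (n : ℝ) ^ 2 / A := Real.rpow_one _
  have hB3 : B ^ 3 * A ^ 2 = (n : ℝ) ^ 4 := by
    have h : B ^ (3 : ℕ) = ((n : ℝ) ^ 2 / A) ^ (2 : ℕ) := by
      rw [hBdef, ← Real.rpow_natCast (((n : ℝ) ^ 2 / A) ^ ((2 : ℝ) / 3)) 3,
        ← Real.rpow_mul (by positivity), ← Real.rpow_natCast ((n : ℝ) ^ 2 / A) 2]
      norm_num
    rw [h, div_pow]
    field_simp
  have hk0 : k ≠ 0 := by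
    intro h
    rw [h] at hk
    simp only [Nat.cast_zero] at hk
    nlinarith
  have hk1 : (1 : ℝ) ≤ (k : ℝ) := by
    exact_mod_cast Nat.one_le_iff_ne_zero.mpr hk0
  have hεB : (1 : ℝ) ≤ ε * B := hk ▸ hk1
  set σ2 : ℝ := ((n : ℝ) - 1) * A ^ 2 / ((n : ℝ) ^ 2 * ((n : ℝ) + 1)) with hσ2
  have hσ2nonneg : 0 ≤ σ2 := by
    apply div_nonneg _ (by positivity)
    nlinarith
  have hσ2le : σ2 ≤ A ^ 2 / (n : ℝ) ^ 2 := by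
    rw [hσ2, div_le_div_iff₀ (by positivity) (by positivity)]
    nlinarith
  set S : Ω → ℝ := fun ω => ∑ i, X i ω with hSdef
  have hSL2 : MemLp S 2 ℙ := memLp_finset_sum Finset.univ (fun i _ => hL2 i)
  have hES : (∫ ω, S ω ∂ℙ) = k * (A / n) := by
    rw [hSdef]
    rw [integral_finset_sum _ (fun i _ => ((hL2 i).integrable one_le_two))]
    simp [hmean, Finset.card_univ, mul_comm]
  have hBA : B * A ≤ (n : ℝ) ^ 2 := (le_div_iff₀ hA0).mp hBx
  have hkAn : (k : ℝ) * (A / n) ≤ ε * n := by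
    rw [hk]
    calc ε * B * (A / n) = ε * (B * A) / n := by ring
      _ ≤ ε * (n : ℝ) ^ 2 / n := by gcongr
      _ = ε * n := by field_simp
  set d : ℝ := c * n - k * (A / n) with hddef
  have hd : (c - ε) * n ≤ d := by
    rw [hddef]; nlinarith
  have hdpos : 0 < d := lt_of_lt_of_le (mul_pos (by linarith) hnpos) hd
  -- variance bound
  set Y : Fin k → Ω → ℝ := fun i ω => X i ω - A / n with hYdef
  have hYmem : ∀ i, MemLp (Y i) 2 ℙ := fun i => (hL2 i).sub (memLp_const _)
  have hYnorm : ∀ i, eLpNorm (Y i) 2 ℙ = ENNReal.ofReal (Real.sqrt σ2) := by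
    intro i
    have h1 : eLpNorm (Y i) 2 ℙ ^ 2 = evariance (X i) ℙ := by
      rw [sq_eLpNorm_two, evariance]
      congr 1
      ext ω
      rw [hmean i]
    have h2 : evariance (X i) ℙ = ENNReal.ofReal σ2 := by
      rw [← (hL2 i).ofReal_variance_eq, hvar i]
    have h3 : (ENNReal.ofReal (Real.sqrt σ2)) ^ 2 = ENNReal.ofReal σ2 := by
      rw [← ENNReal.ofReal_pow (Real.sqrt_nonneg _), Real.sq_sqrt hσ2nonneg]
    have h4 : eLpNorm (Y i) 2 ℙ ^ 2 = (ENNReal.ofReal (Real.sqrt σ2)) ^ 2 := by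
      rw [h1, h2, h3]
    have := congrArg (fun z : ENNReal => z ^ ((1 : ℝ) / 2)) h4
    simpa only [← ENNReal.rpow_natCast _ 2, ← ENNReal.rpow_mul, Nat.cast_ofNat,
      mul_one_div, div_self (two_ne_zero' ℝ), ENNReal.rpow_one] using this
  have hsum : (fun ω => S ω - ∫ x, S x ∂ℙ) = ∑ i, Y i := by
    funext ω
    rw [hES]
    simp only [hSdef, hYdef, Finset.sum_apply, Finset.sum_sub_distrib,
      Finset.sum_const, Finset.card_univ, Fintype.card_fin, nsmul_eq_mul]
  have hevar : evariance S ℙ ≤ ENNReal.ofReal ((k : ℝ) ^ 2 * σ2) := by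
    have e1 : evariance S ℙ = eLpNorm (fun ω => S ω - ∫ x, S x ∂ℙ) 2 ℙ ^ 2 := by
      rw [sq_eLpNorm_two, evariance]
    rw [e1, hsum]
    have e2 : eLpNorm (∑ i, Y i) 2 ℙ ≤ ∑ i : Fin k, eLpNorm (Y i) 2 ℙ :=
      eLpNorm_sum_le (fun i _ => (hYmem i).aestronglyMeasurable) one_le_two
    calc eLpNorm (∑ i, Y i) 2 ℙ ^ 2 ≤ (∑ i : Fin k, eLpNorm (Y i) 2 ℙ) ^ 2 :=
          pow_le_pow_left' e2 2
      _ = ((k : ℕ) * ENNReal.ofReal (Real.sqrt σ2)) ^ 2 := by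
          simp [hYnorm, Finset.card_univ]
      _ = ENNReal.ofReal ((k : ℝ) * Real.sqrt σ2) ^ 2 := by
          rw [ENNReal.ofReal_mul (by positivity)]
          simp
      _ = ENNReal.ofReal (((k : ℝ) * Real.sqrt σ2) ^ 2) := by
          rw [ENNReal.ofReal_pow (by positivity)]
      _ = ENNReal.ofReal ((k : ℝ) ^ 2 * σ2) := by
          rw [mul_pow, Real.sq_sqrt hσ2nonneg]
  have hvarS : variance S ℙ ≤ (k : ℝ) ^ 2 * σ2 := by
    have := ENNReal.toReal_mono ENNReal.ofReal_ne_top hevar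
    rwa [ENNReal.toReal_ofReal (by positivity)] at this
  -- Chebyshev
  have hsubset : {ω | c * n ≤ ∑ i, X i ω} ⊆ {ω | d ≤ |S ω - ∫ x, S x ∂ℙ|} := by
    intro ω hω
    simp only [Set.mem_setOf_eq] at hω ⊢
    rw [hES]
    have : d ≤ S ω - (k : ℝ) * (A / n) := by
      rw [hddef, hSdef]; linarith
    exact this.trans (le_abs_self _)
  have cheb := meas_ge_le_variance_div_sq (μ := ℙ) hSL2 hdpos
  -- arithmetic for the final bound
  have hnum : (k : ℝ) ^ 2 * σ2 ≤ ε ^ 3 * (n : ℝ) ^ 2 := by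
    rw [hk]
    exact key_arith hA0 hε hnpos hB1 hB3 hεB hσ2le
  have hcε : (0:ℝ) ≤ (c - ε) * n := mul_nonneg (by linarith) hnpos.le
  have hden : (c - ε) ^ 2 * (n : ℝ) ^ 2 ≤ d ^ 2 := by
    calc (c - ε) ^ 2 * (n : ℝ) ^ 2 = ((c - ε) * n) ^ 2 := by ring
      _ ≤ d ^ 2 := pow_le_pow_left₀ hcε hd 2
  have hce : (0:ℝ) < c - ε := by linarith
  have hfinal : variance S ℙ / d ^ 2 ≤ ε ^ 3 / (c - ε) ^ 2 := by
    calc variance S ℙ / d ^ 2 ≤ (ε ^ 3 * (n : ℝ) ^ 2) / ((c - ε) ^ 2 * (n : ℝ) ^ 2) :=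
          div_le_div₀ (by positivity) (hvarS.trans hnum) (by positivity) hden
      _ = ε ^ 3 / (c - ε) ^ 2 := by
          rw [mul_div_mul_right _ _ (by positivity : ((n:ℝ)^2) ≠ 0)]
  calc ℙ {ω | c * n ≤ ∑ i, X i ω} ≤ ℙ {ω | d ≤ |S ω - ∫ x, S x ∂ℙ|} := measure_mono hsubset
    _ ≤ ENNReal.ofReal (variance S ℙ / d ^ 2) := cheb
    _ ≤ ENNReal.ofReal (ε ^ 3 / (c - ε) ^ 2) := ENNReal.ofReal_le_ofReal hfinal
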